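/- Let ω_1,…,ω_n be n ≥ 1 distinct complex numbers and let S = {α_1,…,α_s} be a finite subset of ℂ of cardinality s ≥ 1. Then for every n-tuple a = (a_1(T),…,a_n(T)) of non-zero polynomials in ℂ[T], one has |a_1|_∞⋯|a_n|_∞ · ∏_{j=1}^s ( ‖a‖_{α_j}^{-1} · |a_1|_{α_j}⋯|a_n|_{α_j} · |a·f|_{α_j} ) ≥ C(n)^{-s}, where f = (e^{ω_1 T},…,e^{ω_n T}) and C(n) = exp(n(n−1)/2). -/

import Mathlib

noncomputable section

namespace PGNF

open scoped Classical Pointwise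

variable {F : Type*} [Field F]

/-- The field `K_∞ = F((1/T))`, realized as the field of formal Laurent series
in the variable `X = 1/T`. -/
abbrev Kinf (F : Type*) [Field F] := LaurentSeries F

/-- The element `T ∈ K_∞`, i.e. `X⁻¹`. -/
def tK (F : Type*) [Field F] : LaurentSeries F := HahnSeries.single (-1 : ℤ) 1

/-- The absolute value on `K_∞`, given by `|f| = e^{deg f}` on `F[T]`;
in terms of the variable `X = 1/T` this is `|f| = e^{-ord_X(f)}`. -/
def absK (f : LaurentSeries F) : ℝ :=
  if f = 0 then 0 else Real.exp (-(f.order : ℝ))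

/-- The embedding of `A = F[T]` into `K_∞`, sending `T` to `X⁻¹`. -/
def pToK (p : Polynomial F) : LaurentSeries F := Polynomial.aeval (tK F) p

/-- Componentwise embedding of a vector of polynomials into `K_∞`-coordinates. -/
def mapToK {ι : Type*} (x : ι → Polynomial F) : ι → LaurentSeries F := fun i => pToK (x i)

/-- The maximum norm on `K_∞`-coordinate vectors. -/
def snorm {ι : Type*} [Fintype ι] (x : ι → LaurentSeries F) : ℝ := ⨆ i, absK (x i)

/-- The standard bilinear pairing `x·y = Σ x_i y_i` on `K_∞ⁿ`. -/
def dotK {n : ℕ} (x y : Fin n → LaurentSeries F) : LaurentSeries F := ∑ i, x i * y i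

/-- The leading coefficient of a Laurent series in `F((1/T))`
(the coefficient of the highest power of `T`). -/
def leadCoeff (f : LaurentSeries F) : F := f.coeff f.order

/-- A family of vectors is (topologically) orthogonal if the norm of every linear
combination is the maximum of the norms of its terms. -/
def OrthogonalFam {ι : Type*} [Fintype ι] {n : ℕ} (v : ι → Fin n → LaurentSeries F) : Prop :=
  ∀ c : ι → LaurentSeries F, snorm (∑ i, c i • v i) = ⨆ i, snorm (c i • v i)

/-- An orthogonal basis of `K_∞ⁿ`. -/
def IsOrthogonalBasis {n : ℕ} (v : Fin n → Fin n → LaurentSeries F) : Prop :=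
  OrthogonalFam v ∧ LinearIndependent (LaurentSeries F) v ∧
    Submodule.span (LaurentSeries F) (Set.range v) = ⊤

/-- An orthonormal family in `K_∞ⁿ`. -/
def OrthonormalFam {ι : Type*} [Fintype ι] {n : ℕ} (v : ι → Fin n → LaurentSeries F) : Prop :=
  OrthogonalFam v ∧ ∀ i, snorm (v i) = 1

/-- A basis of the `A`-module `Aⁿ`, where `A = F[T]`. -/
def IsABasis {n : ℕ} (x : Fin n → Fin n → Polynomial F) : Prop :=
  LinearIndependent (Polynomial F) x ∧ Submodule.span (Polynomial F) (Set.range x) = ⊤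

/-- The index set for the canonical basis of `⋀^m K_∞ⁿ`: subsets of `{1,…,n}` of size `m`. -/
abbrev SS (n m : ℕ) := {s : Finset (Fin n) // s.card = m}

/-- The `r`-th element (in increasing order) of `s`. -/
def sel {n m : ℕ} (s : SS n m) (r : Fin m) : Fin n := (s.1.orderIsoOfFin s.2 r : Fin n)

/-- The wedge product `v_1 ∧ ⋯ ∧ v_m` of `m` vectors of `K_∞ⁿ`, in Plücker coordinates
with respect to the canonical basis `(e_{i_1} ∧ ⋯ ∧ e_{i_m})_{i_1<⋯<i_m}` of `⋀^m K_∞ⁿ`. -/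
def wedge {n m : ℕ} (v : Fin m → Fin n → LaurentSeries F) : SS n m → LaurentSeries F :=
  fun s => Matrix.det (Matrix.of fun r r' => v r (sel s r'))

/-- The projective distance `dist(x,y) = ‖x∧y‖/(‖x‖‖y‖)` between two points of `K_∞ⁿ`. -/
def pdist {n : ℕ} (x y : Fin n → LaurentSeries F) : ℝ :=
  snorm (wedge ![x, y]) / (snorm x * snorm y)

/-- `L_{u,i}(q)`: the minimum of all `t ≥ 0` for which the solutions `x ∈ Aⁿ` of
`‖x‖ ≤ e^t` and `|u·x| ≤ e^{t-q}` span a subspace of `Kⁿ` of dimension at least `i`. -/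
def LL {n : ℕ} (u : Fin n → LaurentSeries F) (i : ℕ) (q : ℝ) : ℝ :=
  sInf {t : ℝ | 0 ≤ t ∧ ∃ x : Fin i → Fin n → Polynomial F,
    LinearIndependent (LaurentSeries F) (fun j => mapToK (x j)) ∧
    ∀ j, snorm (mapToK (x j)) ≤ Real.exp t ∧
      absK (dotK u (mapToK (x j))) ≤ Real.exp (t - q)}

/-- The map `L_u = (L_{u,1},…,L_{u,n})`. -/
def Lmap {n : ℕ} (u : Fin n → LaurentSeries F) : ℝ → Fin n → ℝ :=
  fun q i => LL u ((i : ℕ) + 1) q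

/-- An `n`-system on `[0,∞)`. -/
def IsNSystem {n : ℕ} (P : ℝ → Fin n → ℝ) : Prop :=
  ∀ q : ℝ, 0 ≤ q →
    ((∀ i, 0 ≤ P q i) ∧ (∀ i j : Fin n, i ≤ j → P q i ≤ P q j) ∧ ∑ i, P q i = q) ∧
    ∃ ε > 0, ∃ k ℓ : Fin n,
      (∀ t : ℝ, max 0 (q - ε) ≤ t → t ≤ q → P t = P q + (t - q) • (Pi.single ℓ 1 : Fin n → ℝ)) ∧
      (∀ t : ℝ, q ≤ t → t ≤ q + ε → P t = P q + (t - q) • (Pi.single k 1 : Fin n → ℝ)) ∧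
      (0 < q → ℓ < k → ∀ i : Fin n, ℓ ≤ i → i ≤ k → P q i = P q ℓ)

/-- The unit ball `O_∞^ι` of `K_∞^ι` for the maximum norm. -/
def stdBody (F : Type*) [Field F] (ι : Type*) : Set (ι → LaurentSeries F) :=
  {x | ∀ i, absK (x i) ≤ 1}

/-- The `i`-th minimum of a subset `C` of `K_∞^ι` with respect to the lattice `A^ι`:
the smallest `|ρ|`, `ρ ∈ K_∞^×`, such that `ρC` contains at least `i` elements of `A^ι`
that are linearly independent. -/
def ithMin {ι : Type*} [Fintype ι] (C : Set (ι → LaurentSeries F)) (i : ℕ) : ℝ :=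
  sInf {r : ℝ | ∃ ρ : LaurentSeries F, ρ ≠ 0 ∧ r = absK ρ ∧
    ∃ x : Fin i → ι → Polynomial F,
      LinearIndependent (LaurentSeries F) (fun j => mapToK (x j)) ∧
      ∀ j, mapToK (x j) ∈ ρ • C}

/-- The `m`-th compound body of `C ⊆ K_∞ⁿ`: the `O_∞`-submodule of `⋀^m K_∞ⁿ`
spanned by the products `v_1 ∧ ⋯ ∧ v_m` with `v_1,…,v_m ∈ C`. -/
def compound {n : ℕ} (C : Set (Fin n → LaurentSeries F)) (m : ℕ) :
    Submodule (PowerSeries F) (SS n m → LaurentSeries F) :=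
  Submodule.span (PowerSeries F)
    {ω | ∃ v : Fin m → Fin n → LaurentSeries F, (∀ r, v r ∈ C) ∧ ω = wedge v}

/-- `L^{(m)}_{u,j}(q)`, relative to the projection `π` of `⋀^m K_∞ⁿ` onto `W^{(m)}`:
the minimum of all `t ≥ 0` for which the solutions `ω ∈ ⋀^m Aⁿ` of `‖ω‖ ≤ e^t` and
`‖π(ω)‖ ≤ e^{t-q}` contain at least `j` linearly independent elements. -/
def Lm {n m : ℕ}
    (π : (SS n m → LaurentSeries F) →ₗ[LaurentSeries F] (SS n m → LaurentSeries F))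
    (j : ℕ) (q : ℝ) : ℝ :=
  sInf {t : ℝ | 0 ≤ t ∧ ∃ ω : Fin j → SS n m → Polynomial F,
    LinearIndependent (LaurentSeries F) (fun r => mapToK (ω r)) ∧
    ∀ r, snorm (mapToK (ω r)) ≤ Real.exp t ∧
      snorm (π (mapToK (ω r))) ≤ Real.exp (t - q)}

/-- The trajectory function `L_ω(q) = max{log‖ω‖, q + log‖π(ω)‖}` of a point
`ω ∈ ⋀^m Aⁿ` (with the convention `log 0 = -∞`, i.e. the second term is omitted
when `π(ω) = 0`). -/
def Lomega {n m : ℕ}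
    (π : (SS n m → LaurentSeries F) →ₗ[LaurentSeries F] (SS n m → LaurentSeries F))
    (ω : SS n m → Polynomial F) (q : ℝ) : ℝ :=
  if π (mapToK ω) = 0 then Real.log (snorm (mapToK ω))
  else max (Real.log (snorm (mapToK ω))) (q + Real.log (snorm (π (mapToK ω))))

/-- The map `Φ_n` listing the coordinates of a point of `ℝⁿ` in increasing order. -/
def PhiN {n : ℕ} (v : Fin n → ℝ) : Fin n → ℝ := v ∘ Tuple.sort v

/-- Deleting the `h`-th entry of an `(n+1)`-tuple and appending `u` at the end. -/
def delAppend {n : ℕ} {α : Type*} (x : Fin (n + 1) → α) (h : Fin (n + 1)) (u : α) :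
    Fin (n + 1) → α :=
  Fin.snoc (fun j : Fin n => x (h.succAbove j)) u

/-- The image in `K_∞ = F((1/T))` of a power series `f ∈ F[[X]] = F[[1/T]]`,
i.e. the series `f(1/T)`. -/
def psToK (f : PowerSeries F) : LaurentSeries F := HahnSeries.ofPowerSeries ℤ F f

/-- The pairing `a·f = Σ a_i f_i` of a polynomial vector with a vector of power series. -/
def dotPS {n : ℕ} (a : Fin n → Polynomial F) (f : Fin n → PowerSeries F) : PowerSeries F :=
  ∑ i, (a i : PowerSeries F) * f i

/-- `f` is normal for `(ρ_1,…,ρ_n)`: every nonzero `a ∈ Aⁿ` with `deg a_i ≤ ρ_i - 1`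
and `ord_0(a·f) ≥ ρ_1+⋯+ρ_n-1` satisfies `ord_0(a·f) = ρ_1+⋯+ρ_n-1`. -/
def IsNormalFor {n : ℕ} (f : Fin n → PowerSeries F) (ρ : Fin n → ℕ) : Prop :=
  ∀ a : Fin n → Polynomial F, a ≠ 0 → (∀ i, (a i).degree < (ρ i : ℕ)) →
    (((∑ i, ρ i) - 1 : ℕ) : ℕ∞) ≤ (dotPS a f).order →
    (dotPS a f).order = (((∑ i, ρ i) - 1 : ℕ) : ℕ∞)

/-- The series `e^{ω/T} = Σ_j (ω^j/j!) T^{-j} ∈ F[[1/T]] ⊆ K_∞` (char. zero). -/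
def expK (ω : F) : LaurentSeries F :=
  psToK (PowerSeries.mk fun j => ω ^ j / (j.factorial : F))

end PGNF

namespace PGNF

open scoped Classical Pointwise

/-- The polynomial `p(T)`, viewed as a power series in `S = T - α`. -/
def polyAt (p : Polynomial ℂ) (α : ℂ) : PowerSeries ℂ :=
  ((p.comp (Polynomial.X + Polynomial.C α) : Polynomial ℂ) : PowerSeries ℂ)

/-- The entire function `e^{ωT} = e^{ωα} Σ_j (ω^j/j!) (T-α)^j`, viewed as a power series
in `S = T - α`. -/
def expAt (ω α : ℂ) : PowerSeries ℂ :=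
  Complex.exp (ω * α) • PowerSeries.mk fun j => ω ^ j / (j.factorial : ℂ)

/-- The absolute value `|g|_α = e^{-ord_α(g)}` on `ℂ[[T-α]]` (with `|0|_α = 0`). -/
def absOrd (g : PowerSeries ℂ) : ℝ :=
  if g = 0 then 0 else Real.exp (-(g.order.toNat : ℝ))

section AdelicAux

open Polynomial PowerSeries

/-- polyAt as a ring hom -/
def shiftHom (α : ℂ) : Polynomial ℂ →+* PowerSeries ℂ :=
  (Polynomial.coeToPowerSeries.ringHom (R := ℂ)).comp
    (Polynomial.eval₂RingHom Polynomial.C (Polynomial.X + Polynomial.C α))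

lemma shiftHom_apply (α : ℂ) (p : Polynomial ℂ) : shiftHom α p = polyAt p α := rfl

lemma polyAt_ne_zero {p : Polynomial ℂ} (hp : p ≠ 0) (α : ℂ) : polyAt p α ≠ 0 := by
  simpa [polyAt, Polynomial.coe_eq_zero_iff, Polynomial.comp_X_add_C_eq_zero_iff] using hp

lemma order_coe_poly {q : Polynomial ℂ} (hq : q ≠ 0) :
    (q : PowerSeries ℂ).order = (q.natTrailingDegree : ℕ∞) := by
  rw [PowerSeries.order_eq_nat]
  constructor
  · simpa [Polynomial.coeff_coe] using (Polynomial.coeff_natTrailingDegree_ne_zero).2 hq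
  · intro i hi
    simpa [Polynomial.coeff_coe] using Polynomial.coeff_eq_zero_of_lt_natTrailingDegree hi

lemma order_polyAt {p : Polynomial ℂ} (hp : p ≠ 0) (α : ℂ) :
    (polyAt p α).order = (p.rootMultiplicity α : ℕ∞) := by
  rw [polyAt, order_coe_poly (Polynomial.comp_X_add_C_ne_zero_iff.2 hp),
    Polynomial.rootMultiplicity_eq_natTrailingDegree]

lemma deriv_polyAt (p : Polynomial ℂ) (α : ℂ) :
    derivativeFun (polyAt p α) = polyAt (Polynomial.derivative p) α := by
  rw [polyAt]
  show PowerSeries.derivative ℂ _ = _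
  rw [derivativeFun_coe, Polynomial.derivative_comp]
  simp [polyAt]

lemma constantCoeff_expAt (ω α : ℂ) :
    PowerSeries.constantCoeff (expAt ω α) = Complex.exp (ω * α) := by
  simp [expAt]

lemma expAt_ne_zero (ω α : ℂ) : expAt ω α ≠ 0 := by
  intro h
  apply Complex.exp_ne_zero (ω * α)
  rw [← constantCoeff_expAt ω α, h, map_zero]

lemma order_expAt (ω α : ℂ) : (expAt ω α).order = 0 := by
  rw [show ((0:ℕ∞) = ((0:ℕ):ℕ∞)) from rfl, PowerSeries.order_eq_nat]
  refine ⟨?_, by omega⟩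
  simpa [PowerSeries.coeff_zero_eq_constantCoeff, constantCoeff_expAt] using
    Complex.exp_ne_zero (ω * α)

lemma deriv_expAt (ω α : ℂ) :
    derivativeFun (expAt ω α) = PowerSeries.C ω * expAt ω α := by
  ext n
  show PowerSeries.coeff n (PowerSeries.derivative ℂ (expAt ω α)) = _
  rw [coeff_derivativeFun]
  simp only [expAt, PowerSeries.coeff_smul, PowerSeries.coeff_mk,
    PowerSeries.coeff_C_mul, smul_eq_mul]
  have hfs : ((n+1).factorial : ℂ) = ((n:ℂ)+1) * (n.factorial : ℂ) := by
    push_cast [Nat.factorial_succ]; ring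
  rw [hfs]
  have h1 : ((n.factorial : ℂ)) ≠ 0 := Nat.cast_ne_zero.2 (Nat.factorial_ne_zero _)
  have h2 : ((n:ℂ)+1) ≠ 0 := Nat.cast_add_one_ne_zero n
  field_simp
  ring


lemma order_le_deriv_add_one (f : PowerSeries ℂ) :
    f.order ≤ (derivativeFun f).order + 1 := by
  by_cases hd : derivativeFun f = 0
  · rw [hd, PowerSeries.order_zero, top_add]; exact le_top
  · set m := (derivativeFun f).order.toNat with hm
    have hord : (derivativeFun f).order = (m : ℕ∞) :=
      (ENat.coe_toNat (by rwa [ne_eq, PowerSeries.order_eq_top])).symm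
    have hco : PowerSeries.coeff m (derivativeFun f) ≠ 0 :=
      (PowerSeries.order_eq_nat.1 hord).1
    change PowerSeries.coeff m (PowerSeries.derivative ℂ f) ≠ 0 at hco
    rw [coeff_derivativeFun] at hco
    have : PowerSeries.coeff (m + 1) f ≠ 0 := fun h => hco (by rw [h, zero_mul])
    calc f.order ≤ ((m + 1 : ℕ) : ℕ∞) := PowerSeries.order_le _ this
    _ = (derivativeFun f).order + 1 := by rw [hord]; push_cast; rfl

lemma order_le_derivStep (f : PowerSeries ℂ) (c : ℂ) :
    f.order ≤ (derivativeFun f + PowerSeries.C c * f).order + 1 := by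
  have hmin := PowerSeries.min_order_le_order_add (derivativeFun f) (PowerSeries.C c * f)
  have h2 : f.order ≤ (PowerSeries.C c * f).order + 1 := by
    have := PowerSeries.le_order_mul (PowerSeries.C c) f
    calc f.order ≤ (PowerSeries.C c).order + f.order := le_add_self
    _ ≤ (PowerSeries.C c * f).order := this
    _ ≤ _ := le_self_add
  calc f.order ≤ min ((derivativeFun f).order + 1) ((PowerSeries.C c * f).order + 1) :=
        le_min (order_le_deriv_add_one f) h2
  _ = min ((derivativeFun f).order) ((PowerSeries.C c * f).order) + 1 :=
        min_add_add_right _ _ _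
  _ ≤ _ := add_le_add_left hmin 1

lemma le_order_sum_add {ι : Type*} (s : Finset ι) (f : ι → PowerSeries ℂ) (c K : ℕ∞)
    (h : ∀ i ∈ s, c ≤ (f i).order + K) : c ≤ (∑ i ∈ s, f i).order + K := by
  induction s using Finset.cons_induction with
  | empty => simp [PowerSeries.order_zero, top_add]
  | cons a s ha ih =>
    rw [Finset.sum_cons]
    have hmin := PowerSeries.min_order_le_order_add (f a) (∑ i ∈ s, f i)
    have : c ≤ min (f a).order (∑ i ∈ s, f i).order + K := by
      rw [← min_add_add_right]
      exact le_min (h a (Finset.mem_cons_self a s))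
        (ih fun i hi => h i (Finset.mem_cons_of_mem hi))
    exact this.trans (add_le_add_left hmin K)

lemma sum_order_le_order_prod {ι : Type*} (s : Finset ι) (f : ι → PowerSeries ℂ) :
    (∑ i ∈ s, (f i).order) ≤ (∏ i ∈ s, f i).order := by
  induction s using Finset.cons_induction with
  | empty => simp
  | cons a s ha ih =>
    rw [Finset.sum_cons, Finset.prod_cons]
    exact (add_le_add_right ih _).trans (PowerSeries.le_order_mul _ _)

lemma degCmul (c : ℂ) (q : Polynomial ℂ) : (Polynomial.C c * q).degree ≤ q.degree := by
  refine (Polynomial.degree_mul_le _ _).trans ?_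
  calc Polynomial.degree (Polynomial.C c) + q.degree ≤ 0 + q.degree :=
        add_le_add_left Polynomial.degree_C_le _
  _ = q.degree := zero_add _

/-- The twisted derivative iteration. -/
def bb (ω : ℂ) (p : Polynomial ℂ) : ℕ → Polynomial ℂ
  | 0 => p
  | k + 1 => Polynomial.derivative (bb ω p k) + Polynomial.C ω * bb ω p k

lemma degree_bb_sub {p : Polynomial ℂ} (hp : p ≠ 0) (ω : ℂ) (k : ℕ) :
    (bb ω p k - Polynomial.C (ω ^ k) * p).degree < p.degree := by
  induction k with
  | zero => simpa [bb] using (Polynomial.degree_eq_natDegree hp ▸ WithBot.bot_lt_coe _)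
  | succ k ih =>
    have hdb : (bb ω p k).degree ≤ p.degree := by
      have : bb ω p k = (bb ω p k - Polynomial.C (ω ^ k) * p) + Polynomial.C (ω ^ k) * p := by
        ring
      rw [this]
      refine (Polynomial.degree_add_le _ _).trans (max_le ih.le ?_)
      exact (degCmul _ _)
    have h1 : (Polynomial.derivative (bb ω p k)).degree < p.degree := by
      by_cases hb : bb ω p k = 0
      · rw [hb]; simpa using (Polynomial.degree_eq_natDegree hp ▸ WithBot.bot_lt_coe _)
      · exact lt_of_lt_of_le (Polynomial.degree_derivative_lt hb) hdb
    have h2 : (Polynomial.C ω * (bb ω p k - Polynomial.C (ω ^ k) * p)).degree < p.degree :=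
      lt_of_le_of_lt (degCmul _ _) ih
    have hre : bb ω p (k+1) - Polynomial.C (ω ^ (k+1)) * p =
        Polynomial.derivative (bb ω p k) +
          Polynomial.C ω * (bb ω p k - Polynomial.C (ω ^ k) * p) := by
      have hC : Polynomial.C (ω ^ (k+1)) = Polynomial.C ω * Polynomial.C (ω ^ k) := by
        rw [← Polynomial.C_mul, ← pow_succ']
      simp only [bb]
      rw [hC]
      ring
    rw [hre]
    exact lt_of_le_of_lt (Polynomial.degree_add_le _ _) (max_lt h1 h2)

lemma degree_bb {p : Polynomial ℂ} (hp : p ≠ 0) (ω : ℂ) (k : ℕ) :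
    (bb ω p k).degree ≤ p.degree := by
  have : bb ω p k = (bb ω p k - Polynomial.C (ω ^ k) * p) + Polynomial.C (ω ^ k) * p := by ring
  rw [this]
  exact (Polynomial.degree_add_le _ _).trans
    (max_le (degree_bb_sub hp ω k).le (degCmul _ _))

lemma natDegree_bb {p : Polynomial ℂ} (hp : p ≠ 0) (ω : ℂ) (k : ℕ) :
    (bb ω p k).natDegree ≤ p.natDegree :=
  Polynomial.natDegree_le_natDegree (degree_bb hp ω k)

lemma coeff_bb_top {p : Polynomial ℂ} (hp : p ≠ 0) (ω : ℂ) (k : ℕ) :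
    (bb ω p k).coeff p.natDegree = ω ^ k * p.leadingCoeff := by
  have h0 : (bb ω p k - Polynomial.C (ω ^ k) * p).coeff p.natDegree = 0 := by
    apply Polynomial.coeff_eq_zero_of_degree_lt
    rw [← Polynomial.degree_eq_natDegree hp]
    exact degree_bb_sub hp ω k
  have := sub_eq_zero.2 (rfl : (bb ω p k).coeff p.natDegree = _)
  have h1 : (bb ω p k).coeff p.natDegree = (Polynomial.C (ω ^ k) * p).coeff p.natDegree := by
    have := Polynomial.coeff_sub (bb ω p k) (Polynomial.C (ω ^ k) * p) p.natDegree
    rw [h0] at this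
    linear_combination (this).symm
  rw [h1, Polynomial.coeff_C_mul, Polynomial.leadingCoeff]

lemma coeff_prod_at {ι : Type*} (s : Finset ι) (f : ι → Polynomial ℂ) (d : ι → ℕ)
    (h : ∀ i ∈ s, (f i).natDegree ≤ d i) :
    (∏ i ∈ s, f i).coeff (∑ i ∈ s, d i) = ∏ i ∈ s, (f i).coeff (d i) := by
  induction s using Finset.cons_induction with
  | empty => simp
  | cons j s hj ih =>
    rw [Finset.prod_cons, Finset.sum_cons, Finset.prod_cons,
      Polynomial.coeff_mul_add_eq_of_natDegree_le (h j (Finset.mem_cons_self j s))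
        ((Polynomial.natDegree_prod_le _ _).trans
          (Finset.sum_le_sum fun i hi => h i (Finset.mem_cons_of_mem hi))),
      ih fun i hi => h i (Finset.mem_cons_of_mem hi)]

variable {n : ℕ} (ω : Fin n → ℂ) (a : Fin n → Polynomial ℂ)

def DD : Polynomial ℂ := Matrix.det (Matrix.of fun k i : Fin n => bb (ω i) (a i) k)

lemma natDegree_DD_le (ha : ∀ i, a i ≠ 0) :
    (DD ω a).natDegree ≤ ∑ i, (a i).natDegree := by
  rw [DD, Matrix.det_apply']
  apply Polynomial.natDegree_sum_le_of_forall_le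
  intro σ _
  refine (Polynomial.natDegree_mul_le).trans ?_
  rw [Polynomial.natDegree_intCast, zero_add]
  exact (Polynomial.natDegree_prod_le _ _).trans
    (Finset.sum_le_sum fun i _ => natDegree_bb (ha i) _ _)

lemma coeff_DD (ha : ∀ i, a i ≠ 0) :
    (DD ω a).coeff (∑ i, (a i).natDegree) =
      (Matrix.vandermonde ω).det * ∏ i, (a i).leadingCoeff := by
  rw [DD, Matrix.det_apply', Polynomial.finset_sum_coeff]
  have hterm : ∀ σ : Equiv.Perm (Fin n),
      ((↑(Equiv.Perm.sign σ : ℤ) : Polynomial ℂ) *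
        ∏ i, (Matrix.of fun k i : Fin n => bb (ω i) (a i) k) (σ i) i).coeff
          (∑ i, (a i).natDegree) =
      ((Equiv.Perm.sign σ : ℤ) : ℂ) * ((∏ i, ω i ^ ((σ i : ℕ))) * ∏ i, (a i).leadingCoeff) := by
    intro σ
    simp only [Matrix.of_apply]
    rw [← Polynomial.C_eq_intCast, Polynomial.coeff_C_mul,
      coeff_prod_at _ _ _ (fun i _ => natDegree_bb (ha i) _ _)]
    congr 1
    rw [← Finset.prod_mul_distrib]
    exact Finset.prod_congr rfl fun i _ => coeff_bb_top (ha i) _ _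
  rw [Finset.sum_congr rfl fun σ _ => hterm σ]
  have hv : (Matrix.vandermonde ω).det = Matrix.det (Matrix.of fun k i : Fin n => ω i ^ (k : ℕ)) := by
    rw [← Matrix.det_transpose]
    congr 1
  rw [hv, Matrix.det_apply', Finset.sum_mul]
  exact Finset.sum_congr rfl fun σ _ => by
    simp [Matrix.vandermonde, mul_assoc]
  
lemma vandermonde_det_ne_zero (hω : Function.Injective ω) :
    (Matrix.vandermonde ω).det ≠ 0 := by
  rw [Matrix.det_vandermonde]
  refine Finset.prod_ne_zero_iff.2 fun i _ => Finset.prod_ne_zero_iff.2 fun j hj => ?_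
  exact sub_ne_zero.2 fun h => (Finset.mem_Ioi.1 hj).ne' (hω h)

lemma DD_ne_zero (hω : Function.Injective ω) (ha : ∀ i, a i ≠ 0) : DD ω a ≠ 0 := by
  intro h
  have := coeff_DD ω a ha
  rw [h, Polynomial.coeff_zero] at this
  exact mul_ne_zero (vandermonde_det_ne_zero ω hω)
    (Finset.prod_ne_zero_iff.2 fun i _ => Polynomial.leadingCoeff_ne_zero.2 (ha i)) this.symm

lemma sum_rootMult_le {s : ℕ} (α : Fin s → ℂ) (hα : Function.Injective α)
    (hω : Function.Injective ω) (ha : ∀ i, a i ≠ 0) :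
    ∑ j, (DD ω a).rootMultiplicity (α j) ≤ ∑ i, (a i).natDegree := by
  classical
  set D := DD ω a
  have hD : D ≠ 0 := DD_ne_zero ω a hω ha
  have h1 : ∑ j, D.rootMultiplicity (α j) = ∑ x ∈ Finset.univ.image α, D.roots.count x := by
    rw [Finset.sum_image (fun x _ y _ h => hα h)]
    exact Finset.sum_congr rfl fun j _ => (Polynomial.count_roots D).symm
  rw [h1]
  have h2 : ∑ x ∈ Finset.univ.image α, D.roots.count x ≤
      ∑ x ∈ D.roots.toFinset ∪ Finset.univ.image α, D.roots.count x :=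
    Finset.sum_le_sum_of_subset Finset.subset_union_right
  have h3 : ∑ x ∈ D.roots.toFinset ∪ Finset.univ.image α, D.roots.count x =
      ∑ x ∈ D.roots.toFinset, D.roots.count x := by
    refine (Finset.sum_subset Finset.subset_union_left fun x _ hx => ?_).symm
    exact Multiset.count_eq_zero.2 fun hh => hx (Multiset.mem_toFinset.2 hh)
  refine (h2.trans h3.le).trans ?_
  rw [Multiset.toFinset_sum_count_eq]
  exact (Polynomial.card_roots' D).trans (natDegree_DD_le ω a ha)


-- ===== chunk 4 : local bound =====

lemma polyAt_mul (p q : Polynomial ℂ) (α : ℂ) :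
    polyAt (p * q) α = polyAt p α * polyAt q α := by
  rw [← shiftHom_apply, ← shiftHom_apply, ← shiftHom_apply, map_mul]

lemma polyAt_add (p q : Polynomial ℂ) (α : ℂ) :
    polyAt (p + q) α = polyAt p α + polyAt q α := by
  rw [← shiftHom_apply, ← shiftHom_apply, ← shiftHom_apply, map_add]

lemma polyAt_C (c : ℂ) (α : ℂ) : polyAt (Polynomial.C c) α = PowerSeries.C c := by
  simp [polyAt]

section Local

variable {n : ℕ} (ω : Fin n → ℂ) (a : Fin n → Polynomial ℂ) (α : ℂ)

/-- matrix entries -/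
def Ment (k : ℕ) (i : Fin n) : PowerSeries ℂ :=
  polyAt (bb (ω i) (a i) k) α * expAt (ω i) α

/-- iterated derivatives of `a · f` -/
def Ek (k : ℕ) : PowerSeries ℂ := ∑ i, Ment ω a α k i

lemma deriv_Ment (k : ℕ) (i : Fin n) :
    derivativeFun (Ment ω a α k i) = Ment ω a α (k + 1) i := by
  rw [Ment, derivativeFun_mul, deriv_expAt, deriv_polyAt]
  show _ = polyAt (bb (ω i) (a i) (k+1)) α * expAt (ω i) α
  rw [show bb (ω i) (a i) (k+1) = Polynomial.derivative (bb (ω i) (a i) k) +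
      Polynomial.C (ω i) * bb (ω i) (a i) k from rfl, polyAt_add, polyAt_mul, polyAt_C]
  simp only [smul_eq_mul]
  ring

lemma deriv_Ek (k : ℕ) : derivativeFun (Ek ω a α k) = Ek ω a α (k + 1) := by
  rw [Ek, Ek, show (derivativeFun : PowerSeries ℂ → PowerSeries ℂ) =
    ⇑(PowerSeries.derivative ℂ).toLinearMap from rfl, map_sum]
  exact Finset.sum_congr rfl fun i _ => deriv_Ment ω a α k i

lemma order_Ment (ha : ∀ i, a i ≠ 0) (k : ℕ) (i : Fin n) :
    (polyAt (a i) α).order ≤ (Ment ω a α k i).order + k := by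
  induction k with
  | zero =>
    rw [show Ment ω a α 0 i = polyAt (a i) α * expAt (ω i) α from rfl,
      PowerSeries.order_mul, order_expAt]
    simp
  | succ k ih =>
    refine ih.trans ?_
    have := order_le_deriv_add_one (Ment ω a α k i)
    rw [deriv_Ment] at this
    calc (Ment ω a α k i).order + k ≤ ((Ment ω a α (k+1) i).order + 1) + k :=
          add_le_add_left this k
    _ = (Ment ω a α (k+1) i).order + (k+1 : ℕ) := by push_cast; ring

lemma order_Ek (k : ℕ) : (Ek ω a α 0).order ≤ (Ek ω a α k).order + k := by
  induction k with
  | zero => simp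
  | succ k ih =>
    refine ih.trans ?_
    have := order_le_deriv_add_one (Ek ω a α k)
    rw [deriv_Ek] at this
    calc (Ek ω a α k).order + k ≤ ((Ek ω a α (k+1)).order + 1) + k := add_le_add_left this k
    _ = (Ek ω a α (k+1)).order + (k+1 : ℕ) := by push_cast; ring

lemma Ek_zero : Ek ω a α 0 = ∑ i, polyAt (a i) α * expAt (ω i) α := rfl

lemma order_prod_expAt : (∏ i, expAt (ω i) α).order = 0 := by
  rw [show ((0:ℕ∞) = ((0:ℕ):ℕ∞)) from rfl, PowerSeries.order_eq_nat]
  refine ⟨?_, by omega⟩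
  rw [PowerSeries.coeff_zero_eq_constantCoeff, map_prod]
  exact Finset.prod_ne_zero_iff.2 fun i _ => by
    rw [constantCoeff_expAt]; exact Complex.exp_ne_zero _

lemma det_M_eq :
    Matrix.det (Matrix.of fun k i : Fin n => Ment ω a α (k : ℕ) i) =
      (∏ i, expAt (ω i) α) * polyAt (DD ω a) α := by
  have h1 : (Matrix.of fun k i : Fin n => Ment ω a α (k : ℕ) i) =
      Matrix.of fun k i : Fin n => expAt (ω i) α *
        ((Matrix.of fun k i : Fin n => bb (ω i) (a i) (k : ℕ)).map (shiftHom α)) k i := by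
    ext k i
    simp only [Matrix.of_apply, Matrix.map_apply, Ment, shiftHom_apply]
    ring
  rw [h1, Matrix.det_mul_row]
  congr 1
  rw [← RingHom.mapMatrix_apply, ← RingHom.map_det, shiftHom_apply, DD]

lemma order_detM :
    (Matrix.det (Matrix.of fun k i : Fin n => Ment ω a α (k : ℕ) i)).order =
      (polyAt (DD ω a) α).order := by
  rw [det_M_eq, PowerSeries.order_mul, order_prod_expAt, zero_add]

lemma local_bound (ha : ∀ i, a i ≠ 0) (j0 : Fin n) :
    (∑ i, polyAt (a i) α * expAt (ω i) α).order +
      ∑ i ∈ Finset.univ.erase j0, (polyAt (a i) α).order ≤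
    (polyAt (DD ω a) α).order + ((∑ i : Fin n, (i : ℕ) : ℕ) : ℕ∞) := by
  classical
  set M : Matrix (Fin n) (Fin n) (PowerSeries ℂ) :=
    Matrix.of fun k i : Fin n => Ment ω a α (k : ℕ) i with hM
  set B : Matrix (Fin n) (Fin n) (PowerSeries ℂ) :=
    M.updateCol j0 (fun k => Ek ω a α (k : ℕ)) with hB
  have hdetB : B.det = M.det := by
    have := Matrix.det_updateCol_sum M j0 (fun _ => (1 : PowerSeries ℂ))
    rw [hB]
    have harg : (fun k : Fin n => Ek ω a α (k : ℕ)) =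
        fun k : Fin n => ∑ i, (1 : PowerSeries ℂ) • M k i := by
      funext k
      simp [Ek, hM]
    rw [harg, this, one_smul]
  set K : ℕ := ∑ i : Fin n, (i : ℕ) with hK
  set c : ℕ∞ := (∑ i, polyAt (a i) α * expAt (ω i) α).order +
      ∑ i ∈ Finset.univ.erase j0, (polyAt (a i) α).order with hc
  have hmain : c ≤ B.det.order + (K : ℕ∞) := by
    rw [Matrix.det_apply']
    apply le_order_sum_add
    intro σ _
    -- entrywise bound
    have hent : ∀ i : Fin n,
        (if i = j0 then (Ek ω a α 0).order else (polyAt (a i) α).order) ≤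
          (B (σ i) i).order + ((σ i : ℕ) : ℕ∞) := by
      intro i
      by_cases hij : i = j0
      · subst hij
        rw [if_pos rfl, hB, Matrix.updateCol_apply, if_pos rfl]
        exact order_Ek ω a α (σ i : ℕ)
      · rw [if_neg hij, hB, Matrix.updateCol_apply, if_neg hij]
        exact order_Ment ω a α ha (σ i : ℕ) i
    have hsum : c ≤ ∑ i, ((B (σ i) i).order + ((σ i : ℕ) : ℕ∞)) := by
      have hcsum : c = ∑ i : Fin n,
          (if i = j0 then (Ek ω a α 0).order else (polyAt (a i) α).order) := by
        calc c = (Ek ω a α 0).order +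
            ∑ i ∈ Finset.univ.erase j0, (polyAt (a i) α).order := by rw [hc, Ek_zero]
        _ = (if j0 = j0 then (Ek ω a α 0).order else (polyAt (a j0) α).order) +
            ∑ i ∈ Finset.univ.erase j0,
              (if i = j0 then (Ek ω a α 0).order else (polyAt (a i) α).order) := by
            rw [if_pos rfl]
            congr 1
            exact (Finset.sum_congr rfl fun i hi => by
              rw [if_neg (Finset.ne_of_mem_erase hi)]).symm
        _ = _ := by
            exact Finset.add_sum_erase _
              (fun i => if i = j0 then (Ek ω a α 0).order else (polyAt (a i) α).order)
              (Finset.mem_univ j0)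
      rw [hcsum]
      exact Finset.sum_le_sum fun i _ => hent i
    have hsplit : ∑ i, ((B (σ i) i).order + ((σ i : ℕ) : ℕ∞)) =
        (∑ i, (B (σ i) i).order) + (K : ℕ∞) := by
      rw [Finset.sum_add_distrib]
      congr 1
      rw [← Nat.cast_sum]
      congr 1
      exact Equiv.sum_comp σ (fun i : Fin n => (i : ℕ))
    refine hsum.trans ?_
    rw [hsplit]
    apply add_le_add_left
    refine (sum_order_le_order_prod _ _).trans ?_
    calc (∏ i, B (σ i) i).order
        ≤ ((↑(Equiv.Perm.sign σ : ℤ) : PowerSeries ℂ)).order + (∏ i, B (σ i) i).order :=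
          le_add_self
    _ ≤ _ := PowerSeries.le_order_mul _ _
  rw [hdetB, order_detM] at hmain
  exact hmain

end Local

-- ===== chunk 5 : global assembly =====

lemma absOrd_of_order {g : PowerSeries ℂ} {m : ℕ} (h : g.order = (m : ℕ∞)) :
    absOrd g = Real.exp (-(m : ℝ)) := by
  have hg : g ≠ 0 := by
    intro h0
    rw [h0, PowerSeries.order_zero] at h
    exact (by simp : ((⊤:ℕ∞) ≠ (m : ℕ∞))) h
  rw [absOrd, if_neg hg, h, ENat.toNat_coe]


end AdelicAux

/-- STATEMENT 17: the adelic estimate (Theorem 6.1). -/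
theorem statement17 {n s : ℕ} (hn : 1 ≤ n) (hs : 1 ≤ s)
    (ω : Fin n → ℂ) (hω : Function.Injective ω)
    (α : Fin s → ℂ) (hα : Function.Injective α)
    (a : Fin n → Polynomial ℂ) (ha : ∀ i, a i ≠ 0) :
    ((Real.exp ((n * (n - 1) : ℝ) / 2))⁻¹) ^ s ≤
      (∏ i, Real.exp ((a i).natDegree : ℝ)) *
      ∏ j, ((⨆ i, absOrd (polyAt (a i) (α j)))⁻¹ *
            (∏ i, absOrd (polyAt (a i) (α j))) *
            absOrd (∑ i, polyAt (a i) (α j) * expAt (ω i) (α j))) := by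
  classical
  have hne : Nonempty (Fin n) := ⟨⟨0, hn⟩⟩
  set K : ℕ := ∑ i : Fin n, (i : ℕ) with hKdef
  set N : ℕ := ∑ i, (a i).natDegree with hNdef
  set μ : Fin s → Fin n → ℕ := fun j i => (a i).rootMultiplicity (α j) with hμ
  set R : Fin s → ℕ := fun j => (DD ω a).rootMultiplicity (α j) with hR
  have hDne : DD ω a ≠ 0 := DD_ne_zero ω a hω ha
  -- choose minimizers
  have hminex : ∀ j, ∃ i0 : Fin n, ∀ i : Fin n, μ j i0 ≤ μ j i := by
    intro j
    obtain ⟨i0, -, hi0⟩ := Finset.exists_min_image Finset.univ (μ j) ⟨Classical.arbitrary _,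
      Finset.mem_univ _⟩
    exact ⟨i0, fun i => hi0 i (Finset.mem_univ i)⟩
  choose j0 hj0 using hminex
  -- the exponential sums
  set E : Fin s → PowerSeries ℂ := fun j => ∑ i, polyAt (a i) (α j) * expAt (ω i) (α j)
    with hE
  -- local bounds, rewritten
  have hloc : ∀ j : Fin s, (E j).order + (∑ i ∈ Finset.univ.erase (j0 j), (μ j i : ℕ∞)) ≤
      ((R j + K : ℕ) : ℕ∞) := by
    intro j
    have h0 := local_bound ω a (α j) ha (j0 j)
    have h1 : ∑ i ∈ Finset.univ.erase (j0 j), (polyAt (a i) (α j)).order =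
        ∑ i ∈ Finset.univ.erase (j0 j), ((μ j i : ℕ∞)) :=
      Finset.sum_congr rfl fun i _ => order_polyAt (ha i) (α j)
    rw [h1, order_polyAt hDne (α j)] at h0
    refine h0.trans (le_of_eq ?_)
    rw [← Nat.cast_add]
  -- E j is nonzero
  have hEne : ∀ j, (E j).order ≠ ⊤ := by
    intro j htop
    have := hloc j
    rw [htop, top_add] at this
    exact ENat.coe_ne_top (R j + K) (top_le_iff.1 this)
  set e : Fin s → ℕ := fun j => (E j).order.toNat with he
  have hEord : ∀ j, (E j).order = ((e j : ℕ) : ℕ∞) := fun j => (ENat.coe_toNat (hEne j)).symm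
  have hE0 : ∀ j, E j ≠ 0 := fun j h => hEne j (by rw [h, PowerSeries.order_zero])
  -- natural number local inequality
  have hnat : ∀ j, e j + ∑ i ∈ Finset.univ.erase (j0 j), μ j i ≤ R j + K := by
    intro j
    have := hloc j
    rw [hEord j, ← Nat.cast_sum, ← Nat.cast_add, Nat.cast_le] at this
    exact this
  have hnat2 : ∀ j, e j + ∑ i, μ j i ≤ μ j (j0 j) + (R j + K) := by
    intro j
    have h1 := Finset.add_sum_erase Finset.univ (μ j) (Finset.mem_univ (j0 j))
    have h2 := hnat j
    omega
  -- global natural inequality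
  have hglob : ∑ j, (e j + ∑ i, μ j i) ≤ (∑ j, μ j (j0 j)) + N + s * K := by
    calc ∑ j, (e j + ∑ i, μ j i) ≤ ∑ j, (μ j (j0 j) + (R j + K)) :=
          Finset.sum_le_sum fun j _ => hnat2 j
    _ = (∑ j, μ j (j0 j)) + ((∑ j, R j) + s * K) := by
        rw [Finset.sum_add_distrib, Finset.sum_add_distrib, Finset.sum_const,
          Finset.card_univ, Fintype.card_fin, smul_eq_mul]
    _ ≤ (∑ j, μ j (j0 j)) + (N + s * K) := by
        have hsum : (∑ j, R j) ≤ N := sum_rootMult_le ω a α hα hω ha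
        omega
    _ = _ := by omega
  -- compute the real quantities
  have habs : ∀ j i, absOrd (polyAt (a i) (α j)) = Real.exp (-(μ j i : ℝ)) :=
    fun j i => absOrd_of_order (order_polyAt (ha i) (α j))
  have habsE : ∀ j, absOrd (E j) = Real.exp (-(e j : ℝ)) :=
    fun j => absOrd_of_order (hEord j)
  have hsup : ∀ j, (⨆ i, absOrd (polyAt (a i) (α j))) = Real.exp (-(μ j (j0 j) : ℝ)) := by
    intro j
    apply le_antisymm
    · refine ciSup_le fun i => ?_
      rw [habs]
      exact Real.exp_le_exp.2 (neg_le_neg (by exact_mod_cast hj0 j i))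
    · have := le_ciSup (f := fun i => absOrd (polyAt (a i) (α j)))
        (Set.Finite.bddAbove (Set.finite_range _)) (j0 j)
      rwa [habs] at this
  -- rewrite the RHS as an exponential
  have hrhs : (∏ i, Real.exp ((a i).natDegree : ℝ)) *
      ∏ j, ((⨆ i, absOrd (polyAt (a i) (α j)))⁻¹ *
            (∏ i, absOrd (polyAt (a i) (α j))) *
            absOrd (∑ i, polyAt (a i) (α j) * expAt (ω i) (α j))) =
      Real.exp ((N : ℝ) + ∑ j, ((μ j (j0 j) : ℝ) - (∑ i, (μ j i : ℝ)) - (e j : ℝ))) := by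
    rw [Real.exp_add, Real.exp_sum]
    congr 1
    · rw [← Real.exp_sum]
      congr 1
      rw [hNdef, Nat.cast_sum]
    · refine Finset.prod_congr rfl fun j _ => ?_
      have h1 : absOrd (∑ i, polyAt (a i) (α j) * expAt (ω i) (α j)) =
          Real.exp (-(e j : ℝ)) := habsE j
      rw [hsup j, h1, ← Real.exp_neg]
      have h2 : ∏ i, absOrd (polyAt (a i) (α j)) = Real.exp (-(∑ i, (μ j i : ℝ))) := by
        calc ∏ i, absOrd (polyAt (a i) (α j)) = ∏ i, Real.exp (-(μ j i : ℝ)) :=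
              Finset.prod_congr rfl fun i _ => habs j i
        _ = Real.exp (∑ i, -(μ j i : ℝ)) := (Real.exp_sum _ _).symm
        _ = Real.exp (-(∑ i, (μ j i : ℝ))) := by rw [Finset.sum_neg_distrib]
      rw [h2, ← Real.exp_add, ← Real.exp_add]
      congr 1
      ring
  rw [hrhs]
  -- reduce to a linear inequality
  have hKcast : (K : ℝ) * 2 = (n : ℝ) * ((n : ℝ) - 1) := by
    have h2 : (∑ i ∈ Finset.range n, i) * 2 = n * (n - 1) := Finset.sum_range_id_mul_two n
    have hKr : K = ∑ i ∈ Finset.range n, i := by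
      rw [hKdef]
      exact Fin.sum_univ_eq_sum_range (fun i => i) n
    have hcast : ((n * (n - 1) : ℕ) : ℝ) = (n : ℝ) * ((n : ℝ) - 1) := by
      rw [Nat.cast_mul, Nat.cast_sub hn, Nat.cast_one]
    rw [hKr, ← hcast, ← h2]
    push_cast
    ring
  have hlhs : ((Real.exp ((n * (n - 1) : ℝ) / 2))⁻¹) ^ s =
      Real.exp (-(s : ℝ) * (K : ℝ)) := by
    rw [← Real.exp_neg, ← Real.exp_nat_mul]
    congr 1
    have hK2 : (K : ℝ) = ((n : ℝ) * ((n : ℝ) - 1)) / 2 := by linarith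
    rw [hK2]
    ring
  rw [hlhs, Real.exp_le_exp]
  -- final linear arithmetic
  have hglobR : (∑ j, ((e j : ℝ) + ∑ i, (μ j i : ℝ))) ≤
      (∑ j, (μ j (j0 j) : ℝ)) + (N : ℝ) + (s : ℝ) * (K : ℝ) := by
    exact_mod_cast hglob
  have hexp : ∑ j, ((μ j (j0 j) : ℝ) - (∑ i, (μ j i : ℝ)) - (e j : ℝ)) =
      (∑ j, (μ j (j0 j) : ℝ)) - ∑ j, ((e j : ℝ) + ∑ i, (μ j i : ℝ)) := by
    rw [← Finset.sum_sub_distrib]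
    exact Finset.sum_congr rfl fun j _ => by ring
  rw [hexp]
  linarith [hglobR]


end PGNF
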